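/- The Černý automaton C_n (n ≥ 2) is quasi-Eulerian with respect to c = 1, and consequently 𝔠(C_n) ≤ 2n(n−1). -/

import Mathlib

open Matrix

/-- The 0-1 transition matrix of a letter: `(p,q)`-entry is 1 iff `δ q a = p`. -/
def letterMat {n k : ℕ} (δ : Fin n → Fin k → Fin n) (a : Fin k) :
    Matrix (Fin n) (Fin n) ℝ :=
  fun p q => if δ q a = p then 1 else 0

/-- The matrix of a word, satisfying `[u][K] = [K·u]`. -/
def wordMat {n k : ℕ} (δ : Fin n → Fin k → Fin n) (w : List (Fin k)) :
    Matrix (Fin n) (Fin n) ℝ :=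
  (w.reverse.map (letterMat δ)).prod

/-- The action of a word on a state. -/
def act {n k : ℕ} (δ : Fin n → Fin k → Fin n) (w : List (Fin k)) (q : Fin n) : Fin n :=
  w.foldl δ q

/-- A word is a reset word if it maps all states to one state. -/
def IsReset {n k : ℕ} (δ : Fin n → Fin k → Fin n) (w : List (Fin k)) : Prop :=
  ∀ p q : Fin n, act δ w p = act δ w q

/-- `A` is quasi-Eulerian with respect to `c`. -/
def QuasiEulerian {n k : ℕ} (δ : Fin n → Fin k → Fin n) (c : ℕ) : Prop :=
  ∃ (E : Finset (Fin n)) (s : Fin n) (p : Fin k → ℝ),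
    s ∈ E ∧ E.card = n - c ∧
    (∀ a, 0 < p a) ∧ (∑ a, p a = 1) ∧
    (∀ q a, δ q a ∈ E → δ q a ≠ s → q ∈ E) ∧
    (∀ i ∈ E, i ≠ s → ∑ j, (∑ a, p a • letterMat δ a) i j = 1)

/-- The Černý automaton `C_n` on states `0, …, n-1`: letter `0` (i.e. `a`) is
the cyclic shift `i ↦ i + 1 (mod n)`, letter `1` (i.e. `b`) fixes every state
except the last, which it sends to `0`. -/
def cerny (n : ℕ) [NeZero n] : Fin n → Fin 2 → Fin n := fun i a =>
  if a = 0 then ⟨(i.val + 1) % n, Nat.mod_lt _ (Nat.pos_of_ne_zero (NeZero.ne n))⟩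
  else if i.val = n - 1 then ⟨0, Nat.pos_of_ne_zero (NeZero.ne n)⟩ else i

section Aux

variable (n : ℕ) [NeZero n]

lemma npos : 0 < n := Nat.pos_of_ne_zero (NeZero.ne n)

lemma cerny_a (i : Fin n) :
    cerny n i 0 = ⟨(i.val + 1) % n, Nat.mod_lt _ (npos n)⟩ := rfl

lemma cerny_b (i : Fin n) :
    cerny n i 1 = if i.val = n - 1 then ⟨0, npos n⟩ else i := rfl

omit [NeZero n] in
lemma act_append {k : ℕ} (δ : Fin n → Fin k → Fin n) (u v : List (Fin k)) (q : Fin n) :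
    act δ (u ++ v) q = act δ v (act δ u q) := List.foldl_append

lemma act_replicate_a (m : ℕ) (i : Fin n) :
    act (cerny n) (List.replicate m 0) i = ⟨(i.val + m) % n, Nat.mod_lt _ (npos n)⟩ := by
  induction m generalizing i with
  | zero =>
    simp [act, Fin.ext_iff, Nat.mod_eq_of_lt i.isLt]
  | succ m ih =>
    rw [List.replicate_succ]
    show act (cerny n) (List.replicate m 0) (cerny n i 0) = _
    rw [ih, cerny_a]
    apply Fin.ext
    simp only [Fin.val_mk]
    rw [Nat.mod_add_mod]
    congr 1
    omega

/-- the block `a^{n-1} b` -/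
def blk (n : ℕ) : List (Fin 2) := List.replicate (n - 1) 0 ++ [1]

lemma act_blk (hn : 2 ≤ n) (i : Fin n) :
    act (cerny n) (blk n) i = ⟨i.val - 1, lt_of_le_of_lt (Nat.sub_le _ _) i.isLt⟩ := by
  rw [blk, act_append, act_replicate_a]
  show cerny n _ 1 = _
  rw [cerny_b]
  rcases Nat.eq_zero_or_pos i.val with h0 | h1
  · have h : (i.val + (n - 1)) % n = n - 1 := by
      rw [h0, Nat.zero_add, Nat.mod_eq_of_lt (by omega)]
    simp only [Fin.val_mk, h, if_true]
    apply Fin.ext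
    simp only [Fin.val_mk]
    omega
  · have hi : i.val < n := i.isLt
    have h : (i.val + (n - 1)) % n = i.val - 1 := by
      have h2 : i.val + (n - 1) = n + (i.val - 1) := by omega
      rw [h2, Nat.add_mod_left, Nat.mod_eq_of_lt (by omega)]
    have hne : i.val - 1 ≠ n - 1 := by omega
    simp only [Fin.val_mk, h, if_neg hne]

lemma act_blks (hn : 2 ≤ n) (m : ℕ) (i : Fin n) :
    (act (cerny n) (List.flatten (List.replicate m (blk n))) i).val = i.val - m := by
  induction m generalizing i with
  | zero => simp [act]
  | succ m ih =>
    rw [List.replicate_succ, List.flatten_cons, act_append, act_blk n hn, ih]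
    simp only [Fin.val_mk]
    omega

lemma rowsum_a (i : Fin n) (hi : i.val ≠ 0) :
    ∑ j, letterMat (cerny n) 0 i j = 1 := by
  have hlt : i.val - 1 < n := lt_of_le_of_lt (Nat.sub_le _ _) i.isLt
  set j0 : Fin n := ⟨i.val - 1, hlt⟩ with hj0
  have key : ∀ j : Fin n, cerny n j 0 = i ↔ j = j0 := by
    intro j
    rw [cerny_a]
    constructor
    · intro h
      have hv : (j.val + 1) % n = i.val := by
        simpa [Fin.ext_iff] using h
      have hj : j.val < n := j.isLt
      rcases Nat.lt_or_ge (j.val + 1) n with h1 | h1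
      · rw [Nat.mod_eq_of_lt h1] at hv
        apply Fin.ext
        simp only [hj0, Fin.val_mk]
        omega
      · have h2 : j.val + 1 = n := by omega
        rw [h2, Nat.mod_self] at hv
        omega
    · rintro rfl
      apply Fin.ext
      simp only [hj0, Fin.val_mk]
      have h3 : i.val - 1 + 1 = i.val := by omega
      rw [h3, Nat.mod_eq_of_lt i.isLt]
  calc ∑ j, letterMat (cerny n) 0 i j
      = ∑ j : Fin n, if j = j0 then (1 : ℝ) else 0 := by
        apply Finset.sum_congr rfl
        intro j _
        simp [letterMat, key j]
    _ = 1 := by rw [Finset.sum_ite_eq']; simp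

lemma rowsum_b (i : Fin n) (hi : i.val ≠ 0) (hi' : i.val ≠ n - 1) :
    ∑ j, letterMat (cerny n) 1 i j = 1 := by
  have key : ∀ j : Fin n, cerny n j 1 = i ↔ j = i := by
    intro j
    rw [cerny_b]
    constructor
    · intro h
      by_cases hj : j.val = n - 1
      · rw [if_pos hj] at h
        exfalso
        apply hi
        rw [← h]
      · rwa [if_neg hj] at h
    · rintro rfl
      rw [if_neg hi']
  calc ∑ j, letterMat (cerny n) 1 i j
      = ∑ j : Fin n, if j = i then (1 : ℝ) else 0 := by
        apply Finset.sum_congr rfl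
        intro j _
        simp [letterMat, key j]
    _ = 1 := by rw [Finset.sum_ite_eq']; simp

end Aux

/-- The Černý automaton `C_n` (`n ≥ 2`) is quasi-Eulerian with respect to
`c = 1`, and consequently its reset length is at most `2n(n-1)`. -/
theorem stmt12 (n : ℕ) [NeZero n] (hn : 2 ≤ n) :
    QuasiEulerian (cerny n) 1 ∧
    ∃ w : List (Fin 2), IsReset (cerny n) w ∧ w.length ≤ 2 * n * (n - 1) := by
  have hpos : 0 < n := npos n
  have hlast : (n - 1) < n := by omega
  set last : Fin n := ⟨n - 1, hlast⟩ with hlastdef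
  have h0ne : (0 : Fin n) ≠ last := by
    intro h
    have h2 := congrArg Fin.val h
    simp only [Fin.val_zero, hlastdef, Fin.val_mk] at h2
    omega
  constructor
  · refine ⟨Finset.univ.erase last, 0, fun _ => 1/2, ?_, ?_, ?_, ?_, ?_, ?_⟩
    · exact Finset.mem_erase.2 ⟨h0ne, Finset.mem_univ _⟩
    · rw [Finset.card_erase_of_mem (Finset.mem_univ _)]
      simp
    · intro a; norm_num
    · rw [Fin.sum_univ_two]; norm_num
    · intro q a _ hne
      refine Finset.mem_erase.2 ⟨?_, Finset.mem_univ _⟩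
      intro hq
      apply hne
      subst hq
      fin_cases a
      · show cerny n last 0 = 0
        rw [cerny_a]
        apply Fin.ext
        simp only [Fin.val_mk, Fin.val_zero, hlastdef]
        have h : n - 1 + 1 = n := by omega
        rw [h, Nat.mod_self]
      · show cerny n last 1 = 0
        rw [cerny_b, if_pos rfl]
        apply Fin.ext
        simp only [Fin.val_mk, Fin.val_zero]
    · intro i hi hine
      have hival : i.val ≠ 0 := by
        intro h
        exact hine (Fin.ext (by simp [h]))
      have hival' : i.val ≠ n - 1 := by
        intro h
        exact (Finset.mem_erase.1 hi).1 (Fin.ext (by simp [h, hlastdef]))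
      have swap : ∀ j : Fin n, (∑ a, (1/2 : ℝ) • letterMat (cerny n) a) i j
          = ∑ a, (1/2 : ℝ) * letterMat (cerny n) a i j := by
        intro j
        rw [Matrix.sum_apply]
        simp [smul_eq_mul]
      calc ∑ j, (∑ a, (1/2 : ℝ) • letterMat (cerny n) a) i j
          = ∑ j, ∑ a, (1/2 : ℝ) * letterMat (cerny n) a i j :=
            Finset.sum_congr rfl fun j _ => swap j
        _ = ∑ a, (1/2 : ℝ) * ∑ j, letterMat (cerny n) a i j := by
            rw [Finset.sum_comm]
            simp [Finset.mul_sum]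
        _ = 1 := by
            rw [Fin.sum_univ_two, rowsum_a n i hival, rowsum_b n i hival hival']
            norm_num
  · refine ⟨List.flatten (List.replicate (n - 1) (blk n)), ?_, ?_⟩
    · intro p q
      have hp := act_blks n hn (n - 1) p
      have hq := act_blks n hn (n - 1) q
      apply Fin.ext
      rw [hp, hq]
      have h1 := p.isLt
      have h2 := q.isLt
      omega
    · rw [List.length_flatten]
      have h : List.map List.length (List.replicate (n - 1) (blk n))
          = List.replicate (n - 1) n := by
        rw [List.map_replicate]
        congr 1
        simp only [blk, List.length_append, List.length_replicate, List.length_singleton]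
        omega
      rw [h, List.sum_replicate, smul_eq_mul]
      calc (n - 1) * n ≤ 2 * ((n - 1) * n) := by omega
        _ = 2 * n * (n - 1) := by ring
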